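/- (Eigenstate ansatz for the strong-coupling effective operator) Let K_eff = Σ_ν ε_ν α_ν†α_ν − (2/(Ω−2s+2)) Σ_{μ,ν} ε_ν β_μ† β_ν act on the space of 2s ideal fermions with no singly occupied levels. If complex numbers η_1,…,η_s (all nonzero and distinct from all 2ε_ρ and from each other) satisfy 0 = Σ_{ρ=1/2}^{j} 1/(η_k − 2ε_ρ) + 2 Σ_{l≠k} 1/(η_l − η_k) for k = 1,…,s, then the state |ψ⟩ = ∏_{k=1}^{s} (Σ_{ρ} β_ρ†/(2ε_ρ − η_k)) |0⟩ satisfies K_eff |ψ⟩ = (Σ_{k=1}^s η_k) |ψ⟩. -/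

import Mathlib

section Helpers
variable {V : Type*} [AddCommGroup V] [Module ℂ V]

theorem swap3 (x A B : Module.End ℂ V) (δ1 δ2 : ℂ)
    (h1 : x * A + A * x = δ1 • 1) (h2 : x * B + B * x = δ2 • 1) :
    x * (A * B) = δ1 • B - δ2 • A + (A * B) * x := by
  have e1 : x * A = δ1 • 1 - A * x := eq_sub_of_add_eq h1
  have e2 : x * B = δ2 • 1 - B * x := eq_sub_of_add_eq h2
  rw [← mul_assoc, e1, sub_mul, smul_mul_assoc, one_mul, mul_assoc, e2, mul_sub,
    mul_smul_comm, mul_one, ← mul_assoc]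
  abel

theorem pair_swap (x A B : Module.End ℂ V)
    (h1 : x * A + A * x = 0) (h2 : x * B + B * x = 0) :
    x * (A * B) = (A * B) * x := by
  have := swap3 x A B 0 0 (by simpa using h1) (by simpa using h2)
  simpa using this

theorem comm4 (A B C D : Module.End ℂ V)
    (hAC : A * C + C * A = 0) (hAD : A * D + D * A = 0)
    (hBC : B * C + C * B = 0) (hBD : B * D + D * B = 0) :
    (A * B) * (C * D) = (C * D) * (A * B) := by
  have hB : B * (C * D) = (C * D) * B := pair_swap B C D hBC hBD
  have hA : A * (C * D) = (C * D) * A := pair_swap A C D hAC hAD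
  calc (A * B) * (C * D) = A * (B * (C * D)) := by rw [mul_assoc]
    _ = A * ((C * D) * B) := by rw [hB]
    _ = (A * (C * D)) * B := (mul_assoc _ _ _).symm
    _ = ((C * D) * A) * B := by rw [hA]
    _ = (C * D) * (A * B) := mul_assoc _ _ _

theorem n_bd (m x A B : Module.End ℂ V) (δ1 δ2 : ℂ)
    (hxA : x * A + A * x = δ1 • 1) (hxB : x * B + B * x = δ2 • 1)
    (hmA : m * A + A * m = 0) (hmB : m * B + B * m = 0)
    (hd1 : δ1 • (m * B) = δ1 • (A * B)) (hd2 : δ2 • (m * A) = -(δ2 • (A * B))) :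
    (m * x) * (A * B) = (A * B) * (m * x) + (δ1 + δ2) • (A * B) := by
  have h1 : x * (A * B) = δ1 • B - δ2 • A + (A * B) * x := swap3 x A B δ1 δ2 hxA hxB
  have h2 : m * (A * B) = (A * B) * m := pair_swap m A B hmA hmB
  calc (m * x) * (A * B) = m * (x * (A * B)) := mul_assoc _ _ _
    _ = δ1 • (m * B) - δ2 • (m * A) + (m * (A * B)) * x := by
        rw [h1, mul_add, mul_sub, mul_smul_comm, mul_smul_comm, ← mul_assoc]
    _ = δ1 • (A * B) + δ2 • (A * B) + ((A * B) * m) * x := by rw [hd1, hd2, h2]; abel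
    _ = (A * B) * (m * x) + (δ1 + δ2) • (A * B) := by rw [add_smul, mul_assoc]; abel

theorem yx_AB (x y A B : Module.End ℂ V)
    (hxA : x * A + A * x = 1) (hxB : x * B + B * x = 0)
    (hyA : y * A + A * y = 0) (hyB : y * B + B * y = 1) :
    (y * x) * (A * B) = (A * B) * (y * x) + 1 - A * x - B * y := by
  have h1 : x * (A * B) = B + (A * B) * x := by
    have := swap3 x A B 1 0 (by simpa using hxA) (by simpa using hxB)
    simpa using this
  have h2 : y * (A * B) = -A + (A * B) * y := by
    have := swap3 y A B 0 1 (by simpa using hyA) (by simpa using hyB)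
    simpa using this
  calc (y * x) * (A * B) = y * (x * (A * B)) := mul_assoc _ _ _
    _ = y * B + (y * (A * B)) * x := by rw [h1, mul_add, ← mul_assoc]
    _ = (1 - B * y) + (-A + (A * B) * y) * x := by rw [h2, eq_sub_of_add_eq hyB]
    _ = (1 - B * y) + (-(A * x) + (A * B) * (y * x)) := by rw [add_mul, neg_mul, mul_assoc]
    _ = (A * B) * (y * x) + 1 - A * x - B * y := by abel

theorem yx_AB' (x y A B : Module.End ℂ V)
    (hxA : x * A + A * x = 0) (hxB : x * B + B * x = 0)
    (hyA : y * A + A * y = 0) (hyB : y * B + B * y = 0) :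
    (y * x) * (A * B) = (A * B) * (y * x) := by
  have h1 := pair_swap x A B hxA hxB
  have h2 := pair_swap y A B hyA hyB
  calc (y * x) * (A * B) = y * (x * (A * B)) := mul_assoc _ _ _
    _ = (y * (A * B)) * x := by rw [h1, ← mul_assoc]
    _ = (A * B) * (y * x) := by rw [h2, mul_assoc]

end Helpers

section CoreAux
variable {V : Type*} [AddCommGroup V] [Module ℂ V] {s : ℕ}
variable (B : Fin s → Module.End ℂ V)

def PhiAux (hcomm : ∀ k l, Commute (B k) (B l)) (v0 : V) (S : Finset (Fin s)) : V :=
  (S.noncommProd B (fun x _ y _ _ => hcomm x y)) v0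

theorem PhiAux_empty (hcomm) (v0 : V) : PhiAux B hcomm v0 ∅ = v0 := by
  exact congrArg (fun f : Module.End ℂ V => f v0) (Finset.noncommProd_empty B _)

theorem PhiAux_insert (hcomm) (v0 : V) {a : Fin s} {S : Finset (Fin s)} (ha : a ∉ S) :
    PhiAux B hcomm v0 (insert a S) = B a (PhiAux B hcomm v0 S) := by
  exact congrArg (fun f : Module.End ℂ V => f v0) (Finset.noncommProd_insert_of_notMem _ _ _ _ ha)

theorem LA (hcomm) (v0 : V) (T A : Module.End ℂ V) (η : Fin s → ℂ)
    (hA : ∀ k, Commute A (B k))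
    (hT : ∀ k, T * B k = B k * T + A + η k • B k)
    (hTv : T v0 = 0) :
    ∀ S : Finset (Fin s), T (PhiAux B hcomm v0 S)
      = (∑ k ∈ S, η k) • PhiAux B hcomm v0 S
        + ∑ k ∈ S, A (PhiAux B hcomm v0 (S.erase k)) := by
  intro S
  induction S using Finset.induction_on with
  | empty => simp [PhiAux_empty, hTv]
  | @insert a S ha IH =>
    have hABa : ∀ x : V, A (B a x) = B a (A x) := by
      intro x
      have := congrArg (fun (f : Module.End ℂ V) => f x) (hA a)
      simpa [Module.End.mul_apply] using this
    rw [PhiAux_insert B hcomm v0 ha]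
    have h1 : T ((B a) (PhiAux B hcomm v0 S))
        = (B a) (T (PhiAux B hcomm v0 S)) + A (PhiAux B hcomm v0 S)
          + η a • ((B a) (PhiAux B hcomm v0 S)) := by
      have := congrArg (fun (f : Module.End ℂ V) => f (PhiAux B hcomm v0 S)) (hT a)
      simpa [Module.End.mul_apply] using this
    rw [h1, IH]
    rw [Finset.sum_insert ha, Finset.sum_insert ha, Finset.erase_insert ha]
    have herase : ∀ k ∈ S, A (PhiAux B hcomm v0 ((insert a S).erase k))
        = B a (A (PhiAux B hcomm v0 (S.erase k))) := by
      intro k hk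
      have hak : a ≠ k := fun h => ha (h ▸ hk)
      rw [Finset.erase_insert_of_ne hak,
        PhiAux_insert B hcomm v0 (fun h => ha (Finset.mem_of_mem_erase h)), hABa]
    rw [Finset.sum_congr rfl herase]
    rw [map_add, map_smul, map_sum]
    rw [add_smul]
    abel

theorem LB (hcomm) (v0 : V) (Nv X : Module.End ℂ V) (d : Fin s → ℂ)
    (hX : ∀ k, Commute X (B k))
    (hN : ∀ k, Nv * B k = B k * Nv + d k • X)
    (hNv : Nv v0 = 0) :
    ∀ S : Finset (Fin s), Nv (PhiAux B hcomm v0 S)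
      = ∑ k ∈ S, d k • X (PhiAux B hcomm v0 (S.erase k)) := by
  intro S
  induction S using Finset.induction_on with
  | empty => simp [PhiAux_empty, hNv]
  | @insert a S ha IH =>
    have hXBa : ∀ x : V, X (B a x) = B a (X x) := by
      intro x
      have := congrArg (fun (f : Module.End ℂ V) => f x) (hX a)
      simpa [Module.End.mul_apply] using this
    rw [PhiAux_insert B hcomm v0 ha]
    have h1 : Nv ((B a) (PhiAux B hcomm v0 S))
        = (B a) (Nv (PhiAux B hcomm v0 S)) + d a • (X (PhiAux B hcomm v0 S)) := by
      have := congrArg (fun (f : Module.End ℂ V) => f (PhiAux B hcomm v0 S)) (hN a)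
      simpa [Module.End.mul_apply] using this
    rw [h1, IH, Finset.sum_insert ha, Finset.erase_insert ha]
    have herase : ∀ k ∈ S, d k • X (PhiAux B hcomm v0 ((insert a S).erase k))
        = B a (d k • X (PhiAux B hcomm v0 (S.erase k))) := by
      intro k hk
      have hak : a ≠ k := fun h => ha (h ▸ hk)
      rw [Finset.erase_insert_of_ne hak,
        PhiAux_insert B hcomm v0 (fun h => ha (Finset.mem_of_mem_erase h)), hXBa, map_smul]
    rw [Finset.sum_congr rfl herase, map_sum]
    abel

theorem LC (hcomm) (v0 : V) (bv Nv X : Module.End ℂ V) (d : Fin s → ℂ)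
    (hX : ∀ k, Commute X (B k))
    (hb : ∀ k, bv * B k = B k * bv + d k • ((1 : Module.End ℂ V) - Nv))
    (hN : ∀ k, Nv * B k = B k * Nv + (2 * d k) • X)
    (hbv : bv v0 = 0) (hNv : Nv v0 = 0) :
    ∀ S : Finset (Fin s), bv (PhiAux B hcomm v0 S)
      = ∑ k ∈ S, d k • PhiAux B hcomm v0 (S.erase k)
        - ∑ k ∈ S, ∑ l ∈ S.erase k,
            (d k * d l) • X (PhiAux B hcomm v0 ((S.erase k).erase l)) := by
  intro S
  induction S using Finset.induction_on with
  | empty => simp [PhiAux_empty, hbv]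
  | @insert a S ha IH =>
    have hXBa : ∀ x : V, X (B a x) = B a (X x) := by
      intro x
      have := congrArg (fun (f : Module.End ℂ V) => f x) (hX a)
      simpa [Module.End.mul_apply] using this
    rw [PhiAux_insert B hcomm v0 ha]
    have h1 : bv ((B a) (PhiAux B hcomm v0 S))
        = (B a) (bv (PhiAux B hcomm v0 S)) + d a • (PhiAux B hcomm v0 S)
          - d a • (Nv (PhiAux B hcomm v0 S)) := by
      have := congrArg (fun (f : Module.End ℂ V) => f (PhiAux B hcomm v0 S)) (hb a)
      simp only [Module.End.mul_apply, LinearMap.add_apply, LinearMap.smul_apply,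
        LinearMap.sub_apply, Module.End.one_apply, smul_sub] at this
      rw [this]; abel
    rw [h1, IH, LB B hcomm v0 Nv X (fun k => 2 * d k) hX hN hNv S]
    rw [Finset.sum_insert ha, Finset.sum_insert ha, Finset.erase_insert ha]
    have herase1 : ∀ k ∈ S, d k • PhiAux B hcomm v0 ((insert a S).erase k)
        = B a (d k • PhiAux B hcomm v0 (S.erase k)) := by
      intro k hk
      have hak : a ≠ k := fun h => ha (h ▸ hk)
      rw [Finset.erase_insert_of_ne hak,
        PhiAux_insert B hcomm v0 (fun h => ha (Finset.mem_of_mem_erase h)), map_smul]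
    rw [Finset.sum_congr rfl herase1]
    have herase2 : ∀ m ∈ S, (∑ l ∈ ((insert a S).erase m),
          (d m * d l) • X (PhiAux B hcomm v0 (((insert a S).erase m).erase l)))
        = (d m * d a) • X (PhiAux B hcomm v0 (S.erase m))
          + ∑ l ∈ S.erase m, B a ((d m * d l) • X (PhiAux B hcomm v0 ((S.erase m).erase l))) := by
      intro m hm
      have ham : a ≠ m := fun h => ha (h ▸ hm)
      have ha' : a ∉ S.erase m := fun h => ha (Finset.mem_of_mem_erase h)
      rw [Finset.erase_insert_of_ne ham, Finset.sum_insert ha', Finset.erase_insert ha']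
      congr 1
      refine Finset.sum_congr rfl fun l hl => ?_
      have hal : a ≠ l := fun h => ha (Finset.mem_of_mem_erase (h ▸ hl))
      rw [Finset.erase_insert_of_ne hal,
        PhiAux_insert B hcomm v0 (fun h => ha (Finset.mem_of_mem_erase (Finset.mem_of_mem_erase h))),
        hXBa, map_smul]
    rw [Finset.sum_congr rfl herase2]
    have hsc : ∀ k ∈ S, d a • (2 * d k) • X (PhiAux B hcomm v0 (S.erase k))
        = (d a * d k) • X (PhiAux B hcomm v0 (S.erase k))
          + (d k * d a) • X (PhiAux B hcomm v0 (S.erase k)) := by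
      intro k _
      rw [smul_smul, ← add_smul]
      ring_nf
    rw [Finset.smul_sum, Finset.sum_congr rfl hsc]
    simp only [map_sub, map_sum, Finset.sum_add_distrib, Finset.sum_sub_distrib]
    abel

end CoreAux

theorem sum_pair_swap {M : Type*} [AddCommMonoid M] {n : ℕ} (f : Fin n → Fin n → M) :
    ∑ k, ∑ l ∈ Finset.univ.erase k, f k l = ∑ k, ∑ l ∈ Finset.univ.erase k, f l k := by
  have h : ∀ (g : Fin n → Fin n → M), ∑ k, ∑ l ∈ Finset.univ.erase k, g k l
      = ∑ k, ∑ l, (if l = k then 0 else g k l) := by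
    intro g
    refine Finset.sum_congr rfl fun k _ => ?_
    have h2 : ∑ l ∈ Finset.univ.erase k, (if l = k then 0 else g k l)
        = ∑ l, (if l = k then 0 else g k l) := Finset.sum_erase _ (by simp)
    rw [← h2]
    exact Finset.sum_congr rfl fun l hl => by rw [if_neg (Finset.ne_of_mem_erase hl)]
  rw [h, h, Finset.sum_comm]
  refine Finset.sum_congr rfl fun k _ => Finset.sum_congr rfl fun l _ => ?_
  by_cases hlk : l = k
  · subst hlk; simp
  · rw [if_neg hlk, if_neg (Ne.symm hlk)]

theorem main_core {V : Type*} [AddCommGroup V] [Module ℂ V]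
    {J : Type*} [Fintype J] [DecidableEq J] {s : ℕ}
    (Ω : ℕ) (hΩJ : Fintype.card J = Ω)
    (bd bv Nv : J → Module.End ℂ V) (T : Module.End ℂ V)
    (ε : J → ℂ) (v0 : V)
    (η : Fin s → ℂ) (hs : 1 ≤ s)
    (hdenom : ((Ω : ℂ) - 2 * (s : ℂ) + 2) ≠ 0)
    (hηε : ∀ (k : Fin s) (ρ : J), η k ≠ 2 * ε ρ)
    (hηdist : Function.Injective η)
    (hRich : ∀ k : Fin s, (∑ ρ : J, 1 / (η k - 2 * ε ρ))
        + 2 * ∑ l ∈ Finset.univ.erase k, 1 / (η l - η k) = 0)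
    (F1 : ∀ ρ σ, Commute (bd ρ) (bd σ))
    (F2 : ∀ ρ, T * bd ρ = bd ρ * T + (2 * ε ρ) • bd ρ)
    (F3 : ∀ ν ρ, bv ν * bd ρ = bd ρ * bv ν
        + if ν = ρ then ((1 : Module.End ℂ V) - Nv ν) else 0)
    (F4 : ∀ ν ρ, Nv ν * bd ρ = bd ρ * Nv ν + (if ν = ρ then (2 : ℂ) else 0) • bd ρ)
    (hTv : T v0 = 0) (hbv : ∀ ν, bv ν v0 = 0) (hNv : ∀ ν, Nv ν v0 = 0) :
    (T - ((2 : ℂ) / ((Ω : ℂ) - 2 * (s : ℂ) + 2)) • ∑ μ : J, ∑ ν : J, ε ν • (bd μ * bv ν))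
        ((List.ofFn fun k : Fin s => ∑ ρ : J, (2 * ε ρ - η k)⁻¹ • bd ρ).prod v0)
      = (∑ k, η k) • ((List.ofFn fun k : Fin s => ∑ ρ : J, (2 * ε ρ - η k)⁻¹ • bd ρ).prod v0) := by
  set c : Fin s → J → ℂ := fun k ρ => (2 * ε ρ - η k)⁻¹ with hc
  set Bop : Fin s → Module.End ℂ V := fun k => ∑ ρ : J, c k ρ • bd ρ with hBop
  have hcne : ∀ (k : Fin s) (ρ : J), 2 * ε ρ - η k ≠ 0 :=
    fun k ρ => sub_ne_zero_of_ne (Ne.symm (hηε k ρ))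
  have hcval : ∀ (k : Fin s) (ρ : J), c k ρ * (2 * ε ρ - η k) = 1 :=
    fun k ρ => inv_mul_cancel₀ (hcne k ρ)
  have hηne : ∀ k l : Fin s, k ≠ l → η l - η k ≠ 0 :=
    fun k l hkl => sub_ne_zero_of_ne (fun h => hkl (hηdist h).symm)
  have hcomm : ∀ k l, Commute (Bop k) (Bop l) := by
    intro k l
    refine Commute.sum_left _ _ _ fun ρ _ => ?_
    refine Commute.sum_right _ _ _ fun σ _ => ?_
    exact ((F1 ρ σ).smul_left _).smul_right _
  have hbdB : ∀ (ν : J) (k : Fin s), Commute (bd ν) (Bop k) := by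
    intro ν k
    refine Commute.sum_right _ _ _ fun σ _ => ?_
    exact (F1 ν σ).smul_right _
  set Bd : Module.End ℂ V := ∑ ρ : J, bd ρ with hBd
  have hBdB : ∀ k, Commute Bd (Bop k) := by
    intro k
    refine Commute.sum_left _ _ _ fun ρ _ => hbdB ρ k
  have hT : ∀ k, T * Bop k = Bop k * T + Bd + η k • Bop k := by
    intro k
    rw [hBop]
    simp only [Finset.mul_sum, Finset.sum_mul]
    rw [Finset.smul_sum, hBd, ← Finset.sum_add_distrib, ← Finset.sum_add_distrib]
    refine Finset.sum_congr rfl fun ρ _ => ?_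
    rw [mul_smul_comm, F2 ρ, smul_mul_assoc, smul_add, smul_smul]
    have : c k ρ * (2 * ε ρ) = 1 + η k * c k ρ := by
      have h := hcval k ρ; ring_nf; ring_nf at h; linear_combination h
    rw [this, add_smul, one_smul, smul_smul]
    abel
  have hbB : ∀ (ν : J) (k : Fin s), bv ν * Bop k
      = Bop k * bv ν + c k ν • ((1 : Module.End ℂ V) - Nv ν) := by
    intro ν k
    rw [hBop]
    simp only [Finset.mul_sum, Finset.sum_mul]
    have : ∀ ρ : J, bv ν * (c k ρ • bd ρ)
        = (c k ρ • bd ρ) * bv ν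
          + (if ν = ρ then c k ρ • ((1 : Module.End ℂ V) - Nv ν) else 0) := by
      intro ρ
      rw [mul_smul_comm, F3 ν ρ, smul_add, smul_mul_assoc, smul_ite, smul_zero]
    rw [Finset.sum_congr rfl fun ρ _ => this ρ, Finset.sum_add_distrib]
    simp
  have hNB : ∀ (ν : J) (k : Fin s), Nv ν * Bop k
      = Bop k * Nv ν + (2 * c k ν) • bd ν := by
    intro ν k
    rw [hBop]
    simp only [Finset.mul_sum, Finset.sum_mul]
    have : ∀ ρ : J, Nv ν * (c k ρ • bd ρ)
        = (c k ρ • bd ρ) * Nv ν + (if ν = ρ then (2 * c k ρ) • bd ρ else 0) := by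
      intro ρ
      rw [mul_smul_comm, F4 ν ρ, smul_add, smul_mul_assoc, smul_smul]
      by_cases h : ν = ρ
      · simp [h, mul_comm]
      · simp [h]
    rw [Finset.sum_congr rfl fun ρ _ => this ρ, Finset.sum_add_distrib]
    simp
  -- relate ψ to PhiAux over univ
  have hψdef : ((List.ofFn fun k : Fin s => ∑ ρ : J, (2 * ε ρ - η k)⁻¹ • bd ρ).prod) v0
      = PhiAux Bop hcomm v0 Finset.univ := by
    have h0 : ((List.finRange s).toFinset : Finset (Fin s)) = Finset.univ :=
      List.toFinset_finRange s
    have h2 : Finset.univ.noncommProd Bop (fun x _ y _ _ => hcomm x y)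
        = ((List.finRange s).toFinset).noncommProd Bop
            (by rw [h0]; exact fun x _ y _ _ => hcomm x y) :=
      Finset.noncommProd_congr h0.symm (fun x _ => rfl) _
    have h3 := Finset.noncommProd_toFinset (List.finRange s) Bop
      (by rw [h0]; exact fun x _ y _ _ => hcomm x y) (List.nodup_finRange s)
    have h4 : (List.ofFn fun k : Fin s => ∑ ρ : J, (2 * ε ρ - η k)⁻¹ • bd ρ)
        = (List.finRange s).map Bop := List.ofFn_eq_map
    show ((List.ofFn fun k : Fin s => ∑ ρ : J, (2 * ε ρ - η k)⁻¹ • bd ρ).prod) v0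
        = (Finset.univ.noncommProd Bop (fun x _ y _ _ => hcomm x y)) v0
    rw [h4]
    exact (congrArg (fun f : Module.End ℂ V => f v0) (h2.trans h3)).symm
  have hBopΦ : ∀ (k : Fin s) (S : Finset (Fin s)), k ∉ S →
      (∑ ν : J, c k ν • (bd ν) (PhiAux Bop hcomm v0 S)) = PhiAux Bop hcomm v0 (insert k S) := by
    intro k S hk
    rw [PhiAux_insert Bop hcomm v0 hk]
    show ∑ ν : J, c k ν • (bd ν) (PhiAux Bop hcomm v0 S)
        = (∑ ρ : J, c k ρ • bd ρ) (PhiAux Bop hcomm v0 S)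
    simp [LinearMap.sum_apply, LinearMap.smul_apply]
  have hTψ := LA Bop hcomm v0 T Bd η hBdB hT hTv Finset.univ
  have hbψ : ∀ ν : J, (bv ν) (PhiAux Bop hcomm v0 Finset.univ)
      = ∑ k : Fin s, c k ν • PhiAux Bop hcomm v0 (Finset.univ.erase k)
        - ∑ k : Fin s, ∑ l ∈ Finset.univ.erase k, (c k ν * c l ν) •
            (bd ν) (PhiAux Bop hcomm v0 ((Finset.univ.erase k).erase l)) :=
    fun ν => LC Bop hcomm v0 (bv ν) (Nv ν) (bd ν) (fun k => c k ν)
      (hbdB ν) (fun k => hbB ν k) (fun k => hNB ν k) (hbv ν) (hNv ν) Finset.univ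
  set w : ℂ := ((Ω : ℂ) - 2 * (s : ℂ) + 2) / 2 with hw
  have hCk : ∀ k : Fin s, (∑ ν : J, c k ν)
      = 2 * ∑ l ∈ Finset.univ.erase k, (η l - η k)⁻¹ := by
    intro k
    have h := hRich k
    have h1 : (∑ ρ : J, 1 / (η k - 2 * ε ρ)) = - ∑ ρ : J, c k ρ := by
      rw [← Finset.sum_neg_distrib]
      refine Finset.sum_congr rfl fun ρ _ => ?_
      rw [one_div, show η k - 2 * ε ρ = -(2 * ε ρ - η k) by ring, inv_neg]
    have h2 : (∑ l ∈ Finset.univ.erase k, 1 / (η l - η k))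
        = ∑ l ∈ Finset.univ.erase k, (η l - η k)⁻¹ := by simp [one_div]
    rw [h1, h2] at h
    linear_combination -h
  have hcard : ∀ k : Fin s, ((Finset.univ.erase k).card : ℂ) = (s : ℂ) - 1 := by
    intro k
    rw [Finset.card_erase_of_mem (Finset.mem_univ k), Finset.card_univ, Fintype.card_fin,
      Nat.cast_sub hs, Nat.cast_one]
  have hwk : ∀ k : Fin s, (∑ ν : J, ε ν * c k ν)
      - (∑ l ∈ Finset.univ.erase k, η l * (η l - η k)⁻¹) = w := by
    intro k
    have hsum1 : (∑ ν : J, ε ν * c k ν)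
        = (Ω : ℂ) / 2 + ∑ ν : J, (η k / 2) * c k ν := by
      have hterm : ∀ ν : J, ε ν * c k ν = 1 / 2 + (η k / 2) * c k ν := by
        intro ν
        linear_combination (1 / 2 : ℂ) * hcval k ν
      rw [Finset.sum_congr rfl fun ν _ => hterm ν, Finset.sum_add_distrib]
      congr 1
      rw [Finset.sum_const, Finset.card_univ, hΩJ, nsmul_eq_mul]
      ring
    rw [hsum1, ← Finset.mul_sum, hCk k]
    rw [show (η k / 2) * (2 * ∑ l ∈ Finset.univ.erase k, (η l - η k)⁻¹)
        = η k * ∑ l ∈ Finset.univ.erase k, (η l - η k)⁻¹ from by ring, Finset.mul_sum]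
    rw [add_sub_assoc, ← Finset.sum_sub_distrib]
    have hterm2 : ∀ l ∈ Finset.univ.erase k,
        η k * (η l - η k)⁻¹ - η l * (η l - η k)⁻¹ = -1 := by
      intro l hl
      have hne : η l - η k ≠ 0 := hηne k l (Finset.ne_of_mem_erase hl).symm
      field_simp; ring
    rw [Finset.sum_congr rfl hterm2, Finset.sum_const, nsmul_eq_mul, hcard k, hw]
    ring
  have hpair : ∀ k l : Fin s, l ∈ Finset.univ.erase k →
      (∑ ν : J, (ε ν * (c k ν * c l ν)) •
          (bd ν) (PhiAux Bop hcomm v0 ((Finset.univ.erase k).erase l)))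
        = (η k * (2 * (η k - η l))⁻¹) • PhiAux Bop hcomm v0 (Finset.univ.erase l)
          - (η l * (2 * (η k - η l))⁻¹) • PhiAux Bop hcomm v0 (Finset.univ.erase k) := by
    intro k l hl
    have hlk : l ≠ k := Finset.ne_of_mem_erase hl
    have hkl : η k - η l ≠ 0 := hηne l k hlk
    have hkni : k ∉ (Finset.univ.erase k).erase l :=
      fun h => Finset.notMem_erase k Finset.univ (Finset.mem_of_mem_erase h)
    have hlni : l ∉ (Finset.univ.erase k).erase l := Finset.notMem_erase l _
    have hik : insert k ((Finset.univ.erase k).erase l) = Finset.univ.erase l := by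
      rw [Finset.erase_right_comm]
      exact Finset.insert_erase
        (Finset.mem_erase.mpr ⟨fun h => hlk h.symm, Finset.mem_univ k⟩)
    have hil : insert l ((Finset.univ.erase k).erase l) = Finset.univ.erase k :=
      Finset.insert_erase hl
    have hscal : ∀ ν : J, ε ν * (c k ν * c l ν)
        = (η k * (2 * (η k - η l))⁻¹) * c k ν - (η l * (2 * (η k - η l))⁻¹) * c l ν := by
      intro ν
      simp only [hc]
      have ha := hcne k ν
      have hb := hcne l ν
      linear_combination (-ε ν * (2 * ε ν - η k)⁻¹ * (2 * ε ν - η l)⁻¹) * mul_inv_cancel₀ (mul_ne_zero two_ne_zero hkl)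
        + (2 * (η k - η l))⁻¹ * ((1 - 2 * ε ν * (2 * ε ν - η l)⁻¹) * mul_inv_cancel₀ ha
          + (2 * ε ν * (2 * ε ν - η k)⁻¹ - 1) * mul_inv_cancel₀ hb)
    have hsum : ∀ ν : J, (ε ν * (c k ν * c l ν)) •
          (bd ν) (PhiAux Bop hcomm v0 ((Finset.univ.erase k).erase l))
        = (η k * (2 * (η k - η l))⁻¹) • (c k ν •
            (bd ν) (PhiAux Bop hcomm v0 ((Finset.univ.erase k).erase l)))
          - (η l * (2 * (η k - η l))⁻¹) • (c l ν •
            (bd ν) (PhiAux Bop hcomm v0 ((Finset.univ.erase k).erase l))) := by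
      intro ν
      rw [smul_smul, smul_smul, ← sub_smul, ← hscal ν]
    rw [Finset.sum_congr rfl fun ν _ => hsum ν, Finset.sum_sub_distrib,
      ← Finset.smul_sum, ← Finset.smul_sum, hBopΦ k _ hkni, hBopΦ l _ hlni, hik, hil]
  have hW : (∑ ν : J, ε ν • (bv ν) (PhiAux Bop hcomm v0 Finset.univ))
      = ∑ k : Fin s, w • PhiAux Bop hcomm v0 (Finset.univ.erase k) := by
    have step1 : (∑ ν : J, ε ν • (bv ν) (PhiAux Bop hcomm v0 Finset.univ))
        = (∑ k : Fin s, (∑ ν : J, ε ν * c k ν) • PhiAux Bop hcomm v0 (Finset.univ.erase k))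
          - ∑ k : Fin s, ∑ l ∈ Finset.univ.erase k,
              (∑ ν : J, (ε ν * (c k ν * c l ν)) •
                (bd ν) (PhiAux Bop hcomm v0 ((Finset.univ.erase k).erase l))) := by
      rw [Finset.sum_congr rfl fun ν _ => congrArg (fun z => ε ν • z) (hbψ ν)]
      simp only [smul_sub, Finset.smul_sum, smul_smul]
      rw [Finset.sum_sub_distrib]
      congr 1
      · rw [Finset.sum_comm]
        exact Finset.sum_congr rfl fun k _ => (Finset.sum_smul).symm
      · rw [Finset.sum_comm]
        exact Finset.sum_congr rfl fun k _ => Finset.sum_comm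
    rw [step1]
    rw [Finset.sum_congr rfl fun k _ => Finset.sum_congr rfl fun l hl => hpair k l hl]
    rw [Finset.sum_congr rfl fun k _ => Finset.sum_sub_distrib _ _,
      Finset.sum_sub_distrib,
      sum_pair_swap (fun k l => (η k * (2 * (η k - η l))⁻¹) •
        PhiAux Bop hcomm v0 (Finset.univ.erase l))]
    rw [← Finset.sum_sub_distrib, ← Finset.sum_sub_distrib]
    refine Finset.sum_congr rfl fun k _ => ?_
    rw [← Finset.sum_sub_distrib]
    have hsc2 : ∀ l ∈ Finset.univ.erase k,
        (η l * (2 * (η l - η k))⁻¹) • PhiAux Bop hcomm v0 (Finset.univ.erase k)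
          - (η l * (2 * (η k - η l))⁻¹) • PhiAux Bop hcomm v0 (Finset.univ.erase k)
        = (η l * (η l - η k)⁻¹) • PhiAux Bop hcomm v0 (Finset.univ.erase k) := by
      intro l hl
      rw [← sub_smul]
      congr 1
      have h1 : η l - η k ≠ 0 := hηne k l (Finset.ne_of_mem_erase hl).symm
      have h2 : η k - η l ≠ 0 := hηne l k (Finset.ne_of_mem_erase hl)
      field_simp
      ring
    rw [Finset.sum_congr rfl hsc2, ← Finset.sum_smul, ← sub_smul, hwk k]
  have hPψ : (∑ μ : J, ∑ ν : J, ε ν • (bd μ * bv ν)) (PhiAux Bop hcomm v0 Finset.univ)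
      = ∑ k : Fin s, w • (Bd (PhiAux Bop hcomm v0 (Finset.univ.erase k))) := by
    have e1 : (∑ μ : J, ∑ ν : J, ε ν • (bd μ * bv ν)) (PhiAux Bop hcomm v0 Finset.univ)
        = ∑ μ : J, (bd μ) (∑ ν : J, ε ν • (bv ν) (PhiAux Bop hcomm v0 Finset.univ)) := by
      simp [LinearMap.sum_apply, LinearMap.smul_apply, Module.End.mul_apply, map_sum, map_smul]
    rw [e1, Finset.sum_congr rfl fun μ _ => congrArg (bd μ) hW]
    simp only [map_sum, map_smul]
    rw [Finset.sum_comm]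
    refine Finset.sum_congr rfl fun k _ => ?_
    rw [← Finset.smul_sum]
    congr 1
    show ∑ μ : J, (bd μ) (PhiAux Bop hcomm v0 (Finset.univ.erase k))
        = (∑ ρ : J, bd ρ) (PhiAux Bop hcomm v0 (Finset.univ.erase k))
    simp [LinearMap.sum_apply]
  rw [hψdef, LinearMap.sub_apply, LinearMap.smul_apply, hTψ, hPψ, Finset.smul_sum]
  have hcancel : ∀ k ∈ (Finset.univ : Finset (Fin s)),
      ((2 : ℂ) / ((Ω : ℂ) - 2 * (s : ℂ) + 2)) • w • (Bd (PhiAux Bop hcomm v0 (Finset.univ.erase k)))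
        = Bd (PhiAux Bop hcomm v0 (Finset.univ.erase k)) := by
    intro k _
    rw [smul_smul, show ((2 : ℂ) / ((Ω : ℂ) - 2 * (s : ℂ) + 2)) * w = 1 from by
      rw [hw]; field_simp, one_smul]
  rw [Finset.sum_congr rfl hcancel]
  abel



/-- Eigenstate ansatz for the strong-coupling effective operator K_eff:
if η_1,…,η_s solve the strong-coupling Richardson equations, then
|ψ⟩ = ∏_k (Σ_ρ β_ρ†/(2ε_ρ − η_k)) |0⟩ satisfies K_eff |ψ⟩ = (Σ_k η_k)|ψ⟩. -/
theorem stmt18 {V : Type*} [AddCommGroup V] [Module ℂ V]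
    {I J : Type*} [Fintype I] [Fintype J] [DecidableEq I] [DecidableEq J]
    (Ω : ℕ) (hΩJ : Fintype.card J = Ω) (hΩI : Fintype.card I = 2 * Ω)
    (neg : I → I) (hneg : ∀ ν, neg (neg ν) = ν) (hnfix : ∀ ν, neg ν ≠ ν)
    (sgn : I → ℂ) (hsgn : ∀ ν, sgn ν = 1 ∨ sgn ν = -1)
    (hsgnneg : ∀ ν, sgn (neg ν) = - sgn ν)
    (adag a : I → Module.End ℂ V)
    (car1 : ∀ μ ν, a μ * adag ν + adag ν * a μ = if μ = ν then 1 else 0)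
    (car2 : ∀ μ ν, a μ * a ν + a ν * a μ = 0)
    (car3 : ∀ μ ν, adag μ * adag ν + adag ν * adag μ = 0)
    (ι : J → I) (hι : Function.Injective ι)
    (hrep : ∀ p q : J, ι p ≠ neg (ι q))
    (eps : I → ℝ) (hepsneg : ∀ ν, eps (neg ν) = eps ν)
    (v0 : V) (hvac : ∀ ν, a ν v0 = 0)
    (s : ℕ) (hs : 1 ≤ s)
    (hdenom : ((Ω : ℂ) - 2 * (s : ℂ) + 2) ≠ 0)
    (η : Fin s → ℂ)
    (hη0 : ∀ k, η k ≠ 0)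
    (hηε : ∀ (k : Fin s) (ρ : J), η k ≠ 2 * (eps (ι ρ) : ℂ))
    (hηdist : Function.Injective η)
    (hRich : ∀ k : Fin s,
      (∑ ρ : J, 1 / (η k - 2 * (eps (ι ρ) : ℂ)))
        + 2 * ∑ l ∈ Finset.univ.erase k, 1 / (η l - η k) = 0) :
    let bd : J → Module.End ℂ V :=
      fun ρ => sgn (ι ρ) • (adag (ι ρ) * adag (neg (ι ρ)))
    let b : J → Module.End ℂ V :=
      fun ρ => sgn (ι ρ) • (a (neg (ι ρ)) * a (ι ρ))
    let Keff : Module.End ℂ V :=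
      (∑ ν : I, (eps ν : ℂ) • (adag ν * a ν))
        - ((2 : ℂ) / ((Ω : ℂ) - 2 * (s : ℂ) + 2)) •
            ∑ μ : J, ∑ ν : J, (eps (ι ν) : ℂ) • (bd μ * b ν)
    let ψ : V :=
      ((List.ofFn fun k : Fin s =>
        ∑ ρ : J, (2 * (eps (ι ρ) : ℂ) - η k)⁻¹ • bd ρ).prod) v0
    Keff ψ = (∑ k, η k) • ψ := by
  intro bd b Keff ψ
  have hbd : ∀ ρ, bd ρ = sgn (ι ρ) • (adag (ι ρ) * adag (neg (ι ρ))) := fun _ => rfl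
  have hb : ∀ ρ, b ρ = sgn (ι ρ) • (a (neg (ι ρ)) * a (ι ρ)) := fun _ => rfl
  have hsgn2 : ∀ i : I, sgn i * sgn i = 1 := by
    intro i; rcases hsgn i with h | h <;> rw [h] <;> norm_num
  set Nv : J → Module.End ℂ V :=
    fun ν => adag (ι ν) * a (ι ν) + adag (neg (ι ν)) * a (neg (ι ν)) with hNvdef
  set T : Module.End ℂ V := ∑ ν : I, (eps ν : ℂ) • (adag ν * a ν) with hTdef
  have hδ : ∀ μ ν : I, a μ * adag ν + adag ν * a μ = (if μ = ν then (1 : ℂ) else 0) • 1 := by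
    intro μ ν; rw [car1]; split <;> simp
  -- F1
  have F1 : ∀ ρ σ : J, Commute (bd ρ) (bd σ) := by
    intro ρ σ
    have hcore : Commute (adag (ι ρ) * adag (neg (ι ρ))) (adag (ι σ) * adag (neg (ι σ))) :=
      comm4 _ _ _ _ (car3 _ _) (car3 _ _) (car3 _ _) (car3 _ _)
    rw [hbd ρ, hbd σ]
    exact (hcore.smul_left _).smul_right _
  -- per-number-operator commutator
  have hnbd : ∀ (μ : I) (ρ : J), (adag μ * a μ) * bd ρ = bd ρ * (adag μ * a μ)
      + ((if μ = ι ρ then (1 : ℂ) else 0) + (if μ = neg (ι ρ) then 1 else 0)) • bd ρ := by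
    intro μ ρ
    have hd1 : (if μ = ι ρ then (1 : ℂ) else 0) • (adag μ * adag (neg (ι ρ)))
        = (if μ = ι ρ then (1 : ℂ) else 0) • (adag (ι ρ) * adag (neg (ι ρ))) := by
      by_cases h : μ = ι ρ <;> simp [h]
    have hd2 : (if μ = neg (ι ρ) then (1 : ℂ) else 0) • (adag μ * adag (ι ρ))
        = -((if μ = neg (ι ρ) then (1 : ℂ) else 0) • (adag (ι ρ) * adag (neg (ι ρ)))) := by
      by_cases h : μ = neg (ι ρ)
      · rw [h, eq_neg_of_add_eq_zero_left (car3 (neg (ι ρ)) (ι ρ)), smul_neg]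
      · simp [h]
    have hcore := n_bd (adag μ) (a μ) (adag (ι ρ)) (adag (neg (ι ρ)))
      (if μ = ι ρ then (1 : ℂ) else 0) (if μ = neg (ι ρ) then (1 : ℂ) else 0)
      (hδ μ (ι ρ)) (hδ μ (neg (ι ρ))) (car3 _ _) (car3 _ _) hd1 hd2
    rw [hbd ρ, mul_smul_comm, hcore, smul_add, smul_mul_assoc, smul_smul, smul_smul,
      mul_comm (sgn (ι ρ))]
  -- F2
  have F2 : ∀ ρ : J, T * bd ρ = bd ρ * T + (2 * ((eps (ι ρ) : ℂ))) • bd ρ := by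
    intro ρ
    have hterm : ∀ ν ∈ (Finset.univ : Finset I),
        ((eps ν : ℂ) • (adag ν * a ν)) * bd ρ
          = (eps ν : ℂ) • (bd ρ * (adag ν * a ν))
            + ((if ν = ι ρ then (eps ν : ℂ) else 0)
              + (if ν = neg (ι ρ) then (eps ν : ℂ) else 0)) • bd ρ := by
      intro ν _
      rw [smul_mul_assoc, hnbd ν ρ, smul_add, smul_smul, mul_add, mul_ite, mul_one,
        mul_zero, mul_ite, mul_one, mul_zero]
    rw [hTdef, Finset.sum_mul, Finset.sum_congr rfl hterm, Finset.sum_add_distrib,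
      ← Finset.sum_smul, Finset.sum_add_distrib,
      Finset.sum_ite_eq' Finset.univ (ι ρ) (fun ν => (eps ν : ℂ)),
      Finset.sum_ite_eq' Finset.univ (neg (ι ρ)) (fun ν => (eps ν : ℂ))]
    simp only [Finset.mem_univ, if_true]
    rw [hepsneg (ι ρ)]
    congr 1
    · rw [Finset.mul_sum]
      exact Finset.sum_congr rfl fun ν _ => (mul_smul_comm _ _ _).symm
    · congr 1; push_cast; ring
  -- F3
  have F3 : ∀ ν ρ : J, b ν * bd ρ = bd ρ * b ν
      + if ν = ρ then ((1 : Module.End ℂ V) - Nv ν) else 0 := by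
    intro ν ρ
    rw [hb ν, hbd ρ]
    by_cases h : ν = ρ
    · subst h
      rw [if_pos rfl, smul_mul_smul_comm, smul_mul_smul_comm, hsgn2, one_smul, one_smul]
      have h1 : a (ι ν) * adag (ι ν) + adag (ι ν) * a (ι ν) = 1 := by
        have := car1 (ι ν) (ι ν); rwa [if_pos rfl] at this
      have h2 : a (ι ν) * adag (neg (ι ν)) + adag (neg (ι ν)) * a (ι ν) = 0 := by
        have := car1 (ι ν) (neg (ι ν))
        rwa [if_neg (fun hh => hnfix (ι ν) hh.symm)] at this
      have h3 : a (neg (ι ν)) * adag (ι ν) + adag (ι ν) * a (neg (ι ν)) = 0 := by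
        have := car1 (neg (ι ν)) (ι ν); rwa [if_neg (hnfix (ι ν))] at this
      have h4 : a (neg (ι ν)) * adag (neg (ι ν)) + adag (neg (ι ν)) * a (neg (ι ν)) = 1 := by
        have := car1 (neg (ι ν)) (neg (ι ν)); rwa [if_pos rfl] at this
      rw [yx_AB (a (ι ν)) (a (neg (ι ν))) (adag (ι ν)) (adag (neg (ι ν))) h1 h2 h3 h4,
        hNvdef]
      beta_reduce
      abel
    · rw [if_neg h, add_zero, smul_mul_smul_comm, smul_mul_smul_comm,
        mul_comm (sgn (ι ν))]
      congr 1
      have h1 : a (ι ν) * adag (ι ρ) + adag (ι ρ) * a (ι ν) = 0 := by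
        have := car1 (ι ν) (ι ρ); rwa [if_neg (fun hh => h (hι hh))] at this
      have h2 : a (ι ν) * adag (neg (ι ρ)) + adag (neg (ι ρ)) * a (ι ν) = 0 := by
        have := car1 (ι ν) (neg (ι ρ)); rwa [if_neg (hrep ν ρ)] at this
      have h3 : a (neg (ι ν)) * adag (ι ρ) + adag (ι ρ) * a (neg (ι ν)) = 0 := by
        have := car1 (neg (ι ν)) (ι ρ)
        rwa [if_neg (fun hh => hrep ρ ν hh.symm)] at this
      have h4 : a (neg (ι ν)) * adag (neg (ι ρ)) + adag (neg (ι ρ)) * a (neg (ι ν)) = 0 := by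
        have := car1 (neg (ι ν)) (neg (ι ρ))
        rwa [if_neg (fun hh => h (hι (by rw [← hneg (ι ν), hh, hneg])))] at this
      exact yx_AB' (a (ι ν)) (a (neg (ι ν))) (adag (ι ρ)) (adag (neg (ι ρ))) h1 h2 h3 h4
  -- F4
  have F4 : ∀ ν ρ : J, Nv ν * bd ρ = bd ρ * Nv ν
      + (if ν = ρ then (2 : ℂ) else 0) • bd ρ := by
    intro ν ρ
    rw [hNvdef]
    show (adag (ι ν) * a (ι ν) + adag (neg (ι ν)) * a (neg (ι ν))) * bd ρ = _
    rw [add_mul, hnbd (ι ν) ρ, hnbd (neg (ι ν)) ρ, mul_add]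
    have e1 : (if ι ν = ι ρ then (1 : ℂ) else 0) = (if ν = ρ then 1 else 0) := by
      by_cases h : ν = ρ
      · simp [h]
      · rw [if_neg (fun hh => h (hι hh)), if_neg h]
    have e2 : (if ι ν = neg (ι ρ) then (1 : ℂ) else 0) = 0 := if_neg (hrep ν ρ)
    have e3 : (if neg (ι ν) = ι ρ then (1 : ℂ) else 0) = 0 :=
      if_neg (fun hh => hrep ρ ν hh.symm)
    have e4 : (if neg (ι ν) = neg (ι ρ) then (1 : ℂ) else 0) = (if ν = ρ then 1 else 0) := by
      by_cases h : ν = ρ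
      · simp [h]
      · rw [if_neg (fun hh => h (hι (by rw [← hneg (ι ν), hh, hneg]))), if_neg h]
    rw [e1, e2, e3, e4, add_zero, zero_add,
      show (if ν = ρ then (2 : ℂ) else 0)
        = (if ν = ρ then (1 : ℂ) else 0) + (if ν = ρ then (1 : ℂ) else 0) from by
          split <;> norm_num,
      add_smul]
    abel
  -- vacuum facts
  have hTv : T v0 = 0 := by
    rw [hTdef]
    show (∑ ν : I, (eps ν : ℂ) • (adag ν * a ν)) v0 = 0
    simp [LinearMap.sum_apply, LinearMap.smul_apply, Module.End.mul_apply, hvac]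
  have hbv : ∀ ν : J, (b ν) v0 = 0 := by
    intro ν
    rw [hb ν]
    simp [LinearMap.smul_apply, Module.End.mul_apply, hvac]
  have hNvv : ∀ ν : J, (Nv ν) v0 = 0 := by
    intro ν
    rw [hNvdef]
    show (adag (ι ν) * a (ι ν) + adag (neg (ι ν)) * a (neg (ι ν))) v0 = 0
    simp [LinearMap.add_apply, Module.End.mul_apply, hvac]
  exact main_core Ω hΩJ bd b Nv T (fun ρ => (eps (ι ρ) : ℂ)) v0 η hs hdenom
    hηε hηdist hRich F1 F2 F3 F4 hTv hbv hNvv
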